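/- For all c ≥ 0 and all φ ∈ ℝ, ∫₀^{2π} ∫₀^{2π} |exp(-c·cos(q₁ - q₂ + φ)) - 1| dq₁ dq₂ = 4π² L₀(c), where L₀ is the modified Struve function of order zero, L₀(c) = Σ_{m≥0} (c/2)^{2m+1} / (Γ(m+3/2))². -/

import Mathlib

open MeasureTheory Real

/-- The modified Struve function of order zero,
`L₀(c) = Σ_{m≥0} (c/2)^(2m+1) / Γ(m+3/2)²`. -/
noncomputable def struveL0 (c : ℝ) : ℝ :=
  ∑' m : ℕ, (c/2)^(2*m+1) / (Real.Gamma ((m : ℝ) + 3/2))^2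

lemma gamma_halves (m : ℕ) :
    Real.Gamma ((m:ℝ) + 3/2)
      = ((2*m+1).factorial : ℝ) * Real.sqrt π / (4^m * m.factorial * 2) := by
  induction m with
  | zero =>
      have : ((0:ℕ):ℝ) + 3/2 = 1/2 + 1 := by norm_num
      rw [this, Real.Gamma_add_one (by norm_num), Real.Gamma_one_half_eq]
      norm_num
      ring
  | succ n ih =>
      have h1 : ((n+1:ℕ):ℝ) + 3/2 = ((n:ℝ) + 3/2) + 1 := by push_cast; ring
      rw [h1, Real.Gamma_add_one (by positivity), ih]
      have h2 : (2*(n+1)+1) = (2*n+3) := by ring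
      rw [h2]
      have h3 : ((2*n+3).factorial : ℝ) = (2*n+3) * ((2*n+2)) * (2*n+1).factorial := by
        rw [show 2*n+3 = (2*n+2)+1 by ring, Nat.factorial_succ,
          show 2*n+2 = (2*n+1)+1 by ring, Nat.factorial_succ]
        push_cast; ring
      have h4 : ((n+1).factorial : ℝ) = (n+1) * n.factorial := by
        rw [Nat.factorial_succ]; push_cast; ring
      rw [h3, h4]
      have hn : (n.factorial : ℝ) ≠ 0 := Nat.cast_ne_zero.2 n.factorial_ne_zero
      field_simp
      ring

lemma wallis (m : ℕ) :
    ∫ x in (0:ℝ)..(π/2), cos x ^ (2*m+1)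
      = 4^m * (m.factorial:ℝ)^2 / (2*m+1).factorial := by
  induction m with
  | zero => simp
  | succ n ih =>
      have h : 2*(n+1)+1 = (2*n+1)+2 := by ring
      rw [h, integral_cos_pow, Real.cos_pi_div_two, Real.sin_zero, ih]
      have h3 : ((2*n+1+2).factorial : ℝ) = (2*n+3) * ((2*n+2)) * (2*n+1).factorial := by
        rw [show 2*n+1+2 = (2*n+2)+1 by ring, Nat.factorial_succ,
          show 2*n+2 = (2*n+1)+1 by ring, Nat.factorial_succ]
        push_cast; ring
      have h4 : ((n+1).factorial : ℝ) = (n+1) * n.factorial := by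
        rw [Nat.factorial_succ]; push_cast; ring
      rw [h3, h4]
      rw [zero_pow (by omega), Real.cos_zero]
      have hn : ((2*n+1).factorial : ℝ) ≠ 0 := Nat.cast_ne_zero.2 (2*n+1).factorial_ne_zero
      have : ((2*n+1:ℕ):ℝ) + 2 ≠ 0 := by positivity
      push_cast
      field_simp
      ring

lemma term_eq (c : ℝ) (m : ℕ) :
    (c/2)^(2*m+1) / (Real.Gamma ((m:ℝ)+3/2))^2
      = (2/π) * (c^(2*m+1) / (2*m+1).factorial * (4^m * (m.factorial:ℝ)^2 / (2*m+1).factorial)) := by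
  rw [gamma_halves]
  have hπ : (0:ℝ) < π := Real.pi_pos
  have hs : Real.sqrt π ^ 2 = π := Real.sq_sqrt hπ.le
  have hf1 : ((2*m+1).factorial : ℝ) ≠ 0 := Nat.cast_ne_zero.2 (2*m+1).factorial_ne_zero
  have hf2 : (m.factorial : ℝ) ≠ 0 := Nat.cast_ne_zero.2 m.factorial_ne_zero
  have h4 : (4:ℝ) = 2^2 := by norm_num
  simp only [div_pow, mul_pow, hs]
  rw [h4, ← pow_mul, ← pow_mul]
  have h2 : (2:ℝ) ≠ 0 := two_ne_zero
  field_simp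
  rw [← pow_mul]
  ring

lemma sinh_cos_integral (c : ℝ) (hc : 0 ≤ c) :
    ∫ x in (0:ℝ)..(π/2), Real.sinh (c * Real.cos x)
      = ∑' m : ℕ, c^(2*m+1) / (2*m+1).factorial
          * (4^m * (m.factorial:ℝ)^2 / (2*m+1).factorial) := by
  have hπ2 : (0:ℝ) ≤ π/2 := by positivity
  set μ := volume.restrict (Set.Ioc (0:ℝ) (π/2)) with hμ
  set F : ℕ → ℝ → ℝ := fun m x => (c * Real.cos x)^(2*m+1) / (2*m+1).factorial with hF
  have hcont : ∀ m, Continuous (F m) := by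
    intro m; fun_prop
  have hint : ∀ m, Integrable (F m) μ := fun m =>
    (hcont m).integrableOn_Ioc
  have hbound : ∀ m x, x ∈ Set.Ioc (0:ℝ) (π/2) → ‖F m x‖ ≤ c^(2*m+1) / (2*m+1).factorial := by
    intro m x _
    rw [hF]
    simp only [norm_div, norm_pow, Real.norm_eq_abs]
    rw [abs_of_nonneg (by positivity : (0:ℝ) ≤ ((2*m+1).factorial : ℝ))]
    have habs : |c * Real.cos x| ≤ c := by
      calc |c * Real.cos x| = c * |Real.cos x| := by rw [abs_mul, abs_of_nonneg hc]
        _ ≤ c * 1 := by gcongr; exact abs_cos_le_one x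
        _ = c := mul_one c
    gcongr
  have hps : π/2 ≤ π := by linarith [Real.pi_pos.le]
  have hμfin : volume (Set.Ioc (0:ℝ) (π/2)) < ⊤ := by
    rw [Real.volume_Ioc]; exact ENNReal.ofReal_lt_top
  have htoReal : (volume (Set.Ioc (0:ℝ) (π/2))).toReal = π/2 := by
    rw [Real.volume_Ioc, ENNReal.toReal_ofReal (by linarith)]
    ring
  have hnormint : Summable fun m => ∫ a, ‖F m a‖ ∂μ := by
    apply Summable.of_nonneg_of_le (fun m => integral_nonneg fun a => norm_nonneg _)
      (fun m => ?_) (((Real.hasSum_sinh c).summable).mul_right (π/2))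
    have h1 : ‖∫ a in Set.Ioc (0:ℝ) (π/2), ‖F m a‖‖
        ≤ (c^(2*m+1) / (2*m+1).factorial) * (volume (Set.Ioc (0:ℝ) (π/2))).toReal := by
      apply norm_setIntegral_le_of_norm_le_const hμfin
      intro x hx
      rw [Real.norm_eq_abs, abs_of_nonneg (norm_nonneg _)]
      exact hbound m x hx
    rw [htoReal] at h1
    exact (Real.le_norm_self _).trans h1
  have hsum : ∀ x, Real.sinh (c * Real.cos x) = ∑' m, F m x := fun x =>
    Real.sinh_eq_tsum _
  rw [intervalIntegral.integral_of_le hπ2]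
  calc (∫ x in Set.Ioc (0:ℝ) (π/2), Real.sinh (c * Real.cos x))
      = ∫ x in Set.Ioc (0:ℝ) (π/2), ∑' m, F m x := by
        apply setIntegral_congr_fun measurableSet_Ioc
        intro x _; exact hsum x
    _ = ∑' m, ∫ x in Set.Ioc (0:ℝ) (π/2), F m x :=
        (integral_tsum_of_summable_integral_norm hint hnormint).symm
    _ = ∑' m : ℕ, c^(2*m+1) / (2*m+1).factorial
          * (4^m * (m.factorial:ℝ)^2 / (2*m+1).factorial) := by
        apply tsum_congr
        intro m
        have : (∫ x in Set.Ioc (0:ℝ) (π/2), F m x)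
            = ∫ x in (0:ℝ)..(π/2), (c^(2*m+1) / (2*m+1).factorial) * Real.cos x ^ (2*m+1) := by
          rw [intervalIntegral.integral_of_le hπ2]
          apply setIntegral_congr_fun measurableSet_Ioc
          intro x _
          rw [hF]
          simp only [mul_pow]
          ring
        rw [this, intervalIntegral.integral_const_mul]
        have hw : ∫ x in (0:ℝ)..(π/2), cos x ^ (2*m+1)
            = 4^m * (m.factorial:ℝ)^2 / (2*m+1).factorial := wallis m
        rw [hw]

lemma I_eq (c : ℝ) (hc : 0 ≤ c) :
    (∫ x in (0:ℝ)..(2*π), |Real.exp (-c * Real.cos x) - 1|)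
      = 4 * ∫ x in (0:ℝ)..(π/2), Real.sinh (c * Real.cos x) := by
  have hπ : (0:ℝ) < π := Real.pi_pos
  set f : ℝ → ℝ := fun x => |Real.exp (-c * Real.cos x) - 1| with hf
  have hfc : Continuous f := by fun_prop
  have hper : Function.Periodic f (2*π) := fun x => by
    simp only [hf, Real.cos_add_two_pi]
  have hii : ∀ a b : ℝ, IntervalIntegrable f volume a b := fun a b =>
    hfc.intervalIntegrable a b
  have h1 : (∫ x in (0:ℝ)..(2*π), f x) = ∫ x in (-(π/2))..(-(π/2)+2*π), f x := by
    have := hper.intervalIntegral_add_eq 0 (-(π/2))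
    simpa using this
  have h2 : (∫ x in (-(π/2))..(-(π/2)+2*π), f x)
      = (∫ x in (-(π/2))..(π/2), f x) + ∫ x in (π/2)..(-(π/2)+2*π), f x :=
    (intervalIntegral.integral_add_adjacent_intervals (hii _ _) (hii _ _)).symm
  have h3 : (∫ x in (π/2)..(-(π/2)+2*π), f x) = ∫ x in (-(π/2))..(π/2), f (x + π) := by
    rw [intervalIntegral.integral_comp_add_right f π]
    congr 1 <;> ring
  have h4 : (∫ x in (-(π/2))..(π/2), f x) + (∫ x in (-(π/2))..(π/2), f (x + π))
      = ∫ x in (-(π/2))..(π/2), (f x + f (x + π)) := by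
    rw [intervalIntegral.integral_add (hii _ _)]
    exact ((hfc.comp (continuous_id.add continuous_const)).intervalIntegrable _ _)
  have h5 : (∫ x in (-(π/2))..(π/2), (f x + f (x + π)))
      = ∫ x in (-(π/2))..(π/2), 2 * Real.sinh (c * Real.cos x) := by
    apply intervalIntegral.integral_congr
    intro x hx
    rw [Set.uIcc_of_le (by linarith)] at hx
    have hcos : 0 ≤ Real.cos x := Real.cos_nonneg_of_mem_Icc hx
    have e1 : f x = 1 - Real.exp (-c * Real.cos x) := by
      show |Real.exp (-c * Real.cos x) - 1| = _
      rw [abs_of_nonpos (by simp only [sub_nonpos, Real.exp_le_one_iff]; nlinarith)]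
      ring
    have e2 : f (x + π) = Real.exp (c * Real.cos x) - 1 := by
      show |Real.exp (-c * Real.cos (x + π)) - 1| = _
      rw [Real.cos_add_pi, show -c * -Real.cos x = c * Real.cos x by ring]
      rw [abs_of_nonneg (by simp only [sub_nonneg, Real.one_le_exp_iff]; nlinarith)]
    show f x + f (x + π) = 2 * Real.sinh (c * Real.cos x)
    rw [e1, e2, Real.sinh_eq]
    ring
  have h6 : (∫ x in (-(π/2))..(π/2), 2 * Real.sinh (c * Real.cos x))
      = 4 * ∫ x in (0:ℝ)..(π/2), Real.sinh (c * Real.cos x) := by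
    have hg : ∀ a b : ℝ, IntervalIntegrable (fun x => 2 * Real.sinh (c * Real.cos x)) volume a b :=
      fun a b => (by fun_prop : Continuous fun x => 2 * Real.sinh (c * Real.cos x)).intervalIntegrable a b
    have hneg : (∫ x in (-(π/2))..(0:ℝ), 2 * Real.sinh (c * Real.cos x))
        = ∫ x in (0:ℝ)..(π/2), 2 * Real.sinh (c * Real.cos x) := by
      have := intervalIntegral.integral_comp_neg (fun x => 2 * Real.sinh (c * Real.cos x))
        (a := (0:ℝ)) (b := π/2)
      simp only [Real.cos_neg, neg_zero] at this
      rw [← this]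
    rw [← intervalIntegral.integral_add_adjacent_intervals (hg (-(π/2)) 0) (hg 0 (π/2)), hneg,
      intervalIntegral.integral_const_mul]
    ring
  rw [h1, h2, h3, h4, h5, h6]

theorem double_angular_integral_eq_struve (c φ : ℝ) (hc : 0 ≤ c) :
    (∫ q₁ in Set.Ioo (0:ℝ) (2*π), ∫ q₂ in Set.Ioo (0:ℝ) (2*π),
        |Real.exp (-c * Real.cos (q₁ - q₂ + φ)) - 1|)
      = 4 * π^2 * struveL0 c := by
  have hπ : (0:ℝ) < π := Real.pi_pos
  set f : ℝ → ℝ := fun x => |Real.exp (-c * Real.cos x) - 1| with hf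
  have hfc : Continuous f := by fun_prop
  have hper : Function.Periodic f (2*π) := fun x => by
    simp only [hf, Real.cos_add_two_pi]
  have inner : ∀ q₁ : ℝ,
      (∫ q₂ in Set.Ioo (0:ℝ) (2*π), |Real.exp (-c * Real.cos (q₁ - q₂ + φ)) - 1|)
        = ∫ x in (0:ℝ)..(2*π), f x := by
    intro q₁
    have hpt : ∀ q₂ : ℝ, |Real.exp (-c * Real.cos (q₁ - q₂ + φ)) - 1| = f ((q₁ + φ) - q₂) := by
      intro q₂
      show _ = |Real.exp (-c * Real.cos ((q₁ + φ) - q₂)) - 1|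
      rw [show (q₁ + φ) - q₂ = q₁ - q₂ + φ by ring]
    simp_rw [hpt]
    rw [← integral_Ioc_eq_integral_Ioo,
      ← intervalIntegral.integral_of_le (by positivity : (0:ℝ) ≤ 2*π),
      intervalIntegral.integral_comp_sub_left f (q₁ + φ)]
    have := hper.intervalIntegral_add_eq (q₁ + φ - 2*π) 0
    rw [show q₁ + φ - 2*π + 2*π = q₁ + φ - 0 by ring] at this
    rw [this, zero_add]
  rw [setIntegral_congr_fun measurableSet_Ioo (fun q₁ _ => inner q₁),
    setIntegral_const, Real.volume_real_Ioo, smul_eq_mul,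
    max_eq_left (by linarith : (0:ℝ) ≤ 2*π - 0)]
  rw [I_eq c hc, sinh_cos_integral c hc]
  have hst : struveL0 c = (2/π) * ∑' m : ℕ, c^(2*m+1) / (2*m+1).factorial
      * (4^m * (m.factorial:ℝ)^2 / (2*m+1).factorial) := by
    rw [struveL0, ← tsum_mul_left]
    exact tsum_congr fun m => term_eq c m
  rw [hst]
  have hπne : π ≠ 0 := ne_of_gt hπ
  field_simp
  ring
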